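/- Define g(n,k) = Σ_{j∈ℤ} q^{2j²−j} [⌈n/2⌉ choose k+j]_q [⌊n/2⌋ choose k−j]_q. Then g(n,k) = [n choose 2k]_q for all n ≥ 0 and all k. -/

import Mathlib

open LaurentPolynomial

/-- The Gaussian (q-)binomial coefficient `[n choose k]_q`, as a Laurent polynomial in `q`,
with the convention that it vanishes for `k < 0` or `k > n`.  Defined via the standard
Pascal-type recurrence `[n+1, k] = q^k [n, k] + [n, k-1]`. -/
noncomputable def qb : ℕ → ℤ → LaurentPolynomial ℤ
  | 0, k => if k = 0 then 1 else 0
  | (n+1), k => T k * qb n k + qb n (k-1)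

/-- The variable `q`. -/
noncomputable def q : LaurentPolynomial ℤ := T 1

/-- The Gaussian binomial coefficient in base `q²` (the paper's `\gaa`), i.e. the
Gaussian binomial coefficient with `q` replaced by `q²`, vanishing for `k < 0` or `k > n`. -/
noncomputable def qb2 : ℕ → ℤ → LaurentPolynomial ℤ
  | 0, k => if k = 0 then 1 else 0
  | (n+1), k => T (2 * k) * qb2 n k + qb2 n (k-1)

/-- `g n k = Σ_{j∈ℤ} q^{2j²−j} [⌈n/2⌉ choose k+j] [⌊n/2⌋ choose k−j]`, binomials in base `q²`. -/
noncomputable def g (n : ℕ) (k : ℤ) : LaurentPolynomial ℤ :=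
  ∑ᶠ j : ℤ, T (2 * j ^ 2 - j) * qb2 ((n + 1) / 2) (k + j) * qb2 (n / 2) (k - j)

/- ### Auxiliary definitions and lemmas -/

lemma qb_zero' (x : ℤ) : qb 0 x = if x = 0 then 1 else 0 := rfl
lemma qb_succ' (n : ℕ) (k : ℤ) : qb (n+1) k = T k * qb n k + qb n (k-1) := rfl
lemma qb2_zero' (x : ℤ) : qb2 0 x = if x = 0 then 1 else 0 := rfl
lemma qb2_succ' (n : ℕ) (k : ℤ) : qb2 (n+1) k = T (2*k) * qb2 n k + qb2 n (k-1) := rfl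

lemma qb2_eq_zero_of_neg (n : ℕ) : ∀ k : ℤ, k < 0 → qb2 n k = 0 := by
  induction n with
  | zero => intro k hk; rw [qb2_zero', if_neg (by omega)]
  | succ n IH =>
    intro k hk
    rw [qb2_succ', IH k hk, IH (k-1) (by omega)]; ring

lemma qb2_eq_zero_of_gt (n : ℕ) : ∀ k : ℤ, (n:ℤ) < k → qb2 n k = 0 := by
  induction n with
  | zero => intro k hk; rw [qb2_zero', if_neg (by omega)]
  | succ n IH =>
    intro k hk
    push_cast at hk
    rw [qb2_succ', IH k (by omega), IH (k-1) (by omega)]; ring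

lemma qb2_bounds {n : ℕ} {k : ℤ} (h : qb2 n k ≠ 0) : 0 ≤ k ∧ k ≤ (n:ℤ) := by
  constructor
  · by_contra hc; exact h (qb2_eq_zero_of_neg n k (by omega))
  · by_contra hc; exact h (qb2_eq_zero_of_gt n k (by omega))

lemma supp_fin (F : ℤ → LaurentPolynomial ℤ) (lo hi : ℤ)
    (h : ∀ j, F j ≠ 0 → lo ≤ j ∧ j ≤ hi) : (Function.support F).Finite :=
  (Set.finite_Icc lo hi).subset fun j hj => Set.mem_Icc.2 (h j hj)

/-- The symmetric Pascal recurrence for `qb`. -/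
lemma qb_symm (n : ℕ) : ∀ k : ℤ, qb (n+1) k = qb n k + T ((n:ℤ)+1-k) * qb n (k-1) := by
  induction n with
  | zero =>
    intro k
    rw [qb_succ']
    simp only [qb_zero', Nat.cast_zero]
    by_cases h0 : k = 0
    · subst h0; norm_num [T_zero]
    · by_cases h1 : k = 1
      · subst h1; norm_num [T_zero]
      · rw [if_neg h0, if_neg (show k - 1 ≠ 0 by omega)]; ring
  | succ n IH =>
    intro k
    have hc : ((n+1:ℕ):ℤ) + 1 - k = (n:ℤ)+2-k := by push_cast; ring
    rw [hc]
    have e1 : T (R:=ℤ) k * T ((n:ℤ)+1-k) = T ((n:ℤ)+1) := by rw [← T_add]; congr 1; ring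
    have e2 : T (R:=ℤ) ((n:ℤ)+2-k) * T (k-1) = T ((n:ℤ)+1) := by rw [← T_add]; congr 1; ring
    calc qb (n+2) k = T k * qb (n+1) k + qb (n+1) (k-1) := rfl
      _ = T k * (qb n k + T ((n:ℤ)+1-k) * qb n (k-1))
          + (qb n (k-1) + T ((n:ℤ)+1-(k-1)) * qb n (k-1-1)) := by rw [IH k, IH (k-1)]
      _ = (T k * qb n k + qb n (k-1)) + T ((n:ℤ)+2-k) * (T (k-1) * qb n (k-1) + qb n (k-1-1)) := by
          have e3 : T (R:=ℤ) ((n:ℤ)+1-(k-1)) = T ((n:ℤ)+2-k) := by congr 1; ring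
          rw [e3]
          linear_combination (qb n (k-1)) * e1 - (qb n (k-1)) * e2
      _ = qb (n+1) k + T ((n:ℤ)+2-k) * qb (n+1) (k-1) := by rw [qb_succ' n k, qb_succ' n (k-1)]

/-- The symmetric Pascal recurrence for `qb2`. -/
lemma qb2_symm (n : ℕ) : ∀ k : ℤ, qb2 (n+1) k = qb2 n k + T (2*((n:ℤ)+1-k)) * qb2 n (k-1) := by
  induction n with
  | zero =>
    intro k
    rw [qb2_succ']
    simp only [qb2_zero', Nat.cast_zero]
    by_cases h0 : k = 0
    · subst h0; norm_num [T_zero]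
    · by_cases h1 : k = 1
      · subst h1; norm_num [T_zero]
      · rw [if_neg h0, if_neg (show k - 1 ≠ 0 by omega)]; ring
  | succ n IH =>
    intro k
    have hc : 2*(((n+1:ℕ):ℤ) + 1 - k) = 2*((n:ℤ)+2-k) := by push_cast; ring
    rw [hc]
    have e1 : T (R:=ℤ) (2*k) * T (2*((n:ℤ)+1-k)) = T (2*(n:ℤ)+2) := by rw [← T_add]; congr 1; ring
    have e2 : T (R:=ℤ) (2*((n:ℤ)+2-k)) * T (2*(k-1)) = T (2*(n:ℤ)+2) := by
      rw [← T_add]; congr 1; ring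
    calc qb2 (n+2) k = T (2*k) * qb2 (n+1) k + qb2 (n+1) (k-1) := rfl
      _ = T (2*k) * (qb2 n k + T (2*((n:ℤ)+1-k)) * qb2 n (k-1))
          + (qb2 n (k-1) + T (2*((n:ℤ)+1-(k-1))) * qb2 n (k-1-1)) := by rw [IH k, IH (k-1)]
      _ = (T (2*k) * qb2 n k + qb2 n (k-1))
          + T (2*((n:ℤ)+2-k)) * (T (2*(k-1)) * qb2 n (k-1) + qb2 n (k-1-1)) := by
          have e3 : T (R:=ℤ) (2*((n:ℤ)+1-(k-1))) = T (2*((n:ℤ)+2-k)) := by congr 1; ring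
          rw [e3]
          linear_combination (qb2 n (k-1)) * e1 - (qb2 n (k-1)) * e2
      _ = qb2 (n+1) k + T (2*((n:ℤ)+2-k)) * qb2 (n+1) (k-1) := by
          rw [qb2_succ' n k, qb2_succ' n (k-1)]

/-- Generic version of `g`. -/
noncomputable def G (a b : ℕ) (k : ℤ) : LaurentPolynomial ℤ :=
  ∑ᶠ j : ℤ, T (2 * j ^ 2 - j) * qb2 a (k + j) * qb2 b (k - j)

/-- Companion sum for odd binomials. -/
noncomputable def H (a b : ℕ) (k : ℤ) : LaurentPolynomial ℤ :=
  ∑ᶠ j : ℤ, T (2 * j ^ 2 + j) * qb2 a (k + 1 + j) * qb2 b (k - j)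

lemma g_eq (n : ℕ) (k : ℤ) : g n k = G ((n+1)/2) (n/2) k := rfl

/- Reindexing lemmas. -/

lemma sumA (m : ℕ) (k : ℤ) :
    ∑ᶠ j : ℤ, T (2 * j ^ 2 + j) * qb2 m (k + j) * qb2 m (k - j) = G m m k := by
  rw [G, ← finsum_comp_equiv (Equiv.neg ℤ)
    (f := fun j : ℤ => T (2 * j ^ 2 - j) * qb2 m (k + j) * qb2 m (k - j))]
  refine finsum_congr fun j => ?_
  simp only [Equiv.neg_apply]
  rw [show 2 * (-j) ^ 2 - -j = 2 * j ^ 2 + j by ring, show k + -j = k - j by ring,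
    show k - -j = k + j by ring]
  ring

lemma sumB (m : ℕ) (k : ℤ) :
    ∑ᶠ j : ℤ, T (2 * j ^ 2 - j) * qb2 m (k + j - 1) * qb2 m (k - j) = H m m (k-1) := by
  rw [H, ← finsum_comp_equiv (Equiv.neg ℤ)
    (f := fun j : ℤ => T (2 * j ^ 2 - j) * qb2 m (k + j - 1) * qb2 m (k - j))]
  refine finsum_congr fun j => ?_
  simp only [Equiv.neg_apply]
  rw [show 2 * (-j) ^ 2 - -j = 2 * j ^ 2 + j by ring, show k + -j - 1 = k - 1 - j by ring,
    show k - -j = k - 1 + 1 + j by ring]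
  ring

lemma sumC (m : ℕ) (k : ℤ) :
    ∑ᶠ j : ℤ, T (2 * j ^ 2 + 3 * j + 1) * qb2 m (k + 1 + j) * qb2 m (k - j) = H m m k := by
  rw [H, ← finsum_comp_equiv (Equiv.subLeft (-1 : ℤ))
    (f := fun j : ℤ => T (2 * j ^ 2 + j) * qb2 m (k + 1 + j) * qb2 m (k - j))]
  refine finsum_congr fun j => ?_
  simp only [Equiv.subLeft_apply]
  rw [show 2 * (-1 - j) ^ 2 + (-1 - j) = 2 * j ^ 2 + 3 * j + 1 by ring,
    show k + 1 + (-1 - j) = k - j by ring, show k - (-1 - j) = k + 1 + j by ring]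
  ring

lemma sumD (a b : ℕ) (k : ℤ) :
    ∑ᶠ j : ℤ, T (2 * j ^ 2 + 3 * j + 1) * qb2 a (k + 1 + j) * qb2 b (k - 1 - j) = G a b k := by
  rw [G, ← finsum_comp_equiv (Equiv.addRight (-1 : ℤ))
    (f := fun j : ℤ => T (2 * j ^ 2 + 3 * j + 1) * qb2 a (k + 1 + j) * qb2 b (k - 1 - j))]
  refine finsum_congr fun j => ?_
  simp only [Equiv.coe_addRight]
  rw [show 2 * (j + -1) ^ 2 + 3 * (j + -1) + 1 = 2 * j ^ 2 - j by ring,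
    show k + 1 + (j + -1) = k + j by ring, show k - 1 - (j + -1) = k - j by ring]

lemma sumE (a b : ℕ) (k : ℤ) :
    ∑ᶠ j : ℤ, T (2 * j ^ 2 + j) * qb2 a (k + j) * qb2 b (k - 1 - j) = H a b (k-1) := by
  rw [H]
  refine finsum_congr fun j => ?_
  rw [show k - 1 + 1 + j = k + j by ring]

/- ### The four key recurrences for `G` and `H` -/

lemma keyL1 (m : ℕ) (k : ℤ) : G (m+1) m k = T (2*k) * G m m k + H m m (k-1) := by
  have step : ∀ j : ℤ, T (2 * j ^ 2 - j) * qb2 (m+1) (k + j) * qb2 m (k - j)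
      = T (2*k) * (T (2 * j ^ 2 + j) * qb2 m (k + j) * qb2 m (k - j))
        + T (2 * j ^ 2 - j) * qb2 m (k + j - 1) * qb2 m (k - j) := by
    intro j
    rw [qb2_succ']
    have e : T (R:=ℤ) (2 * j ^ 2 - j) * T (2*(k+j)) = T (2*k) * T (2 * j ^ 2 + j) := by
      rw [← T_add, ← T_add]; congr 1; ring
    calc T (2 * j ^ 2 - j) * (T (2*(k+j)) * qb2 m (k+j) + qb2 m (k+j-1)) * qb2 m (k - j)
        = (T (2 * j ^ 2 - j) * T (2*(k+j))) * qb2 m (k+j) * qb2 m (k-j)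
          + T (2 * j ^ 2 - j) * qb2 m (k+j-1) * qb2 m (k-j) := by ring
      _ = _ := by rw [e]; ring
  have hf1 : (Function.support fun j : ℤ =>
      T (2*k) * (T (2 * j ^ 2 + j) * qb2 m (k + j) * qb2 m (k - j))).Finite := by
    apply supp_fin _ (-k) ((m:ℤ) - k)
    intro j hj
    have h2 : qb2 m (k+j) ≠ 0 := fun h0 => hj (by rw [h0]; ring)
    have := qb2_bounds h2; omega
  have hf1' : (Function.support fun j : ℤ =>
      T (2 * j ^ 2 + j) * qb2 m (k + j) * qb2 m (k - j)).Finite := by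
    apply supp_fin _ (-k) ((m:ℤ) - k)
    intro j hj
    have h2 : qb2 m (k+j) ≠ 0 := fun h0 => hj (by rw [h0]; ring)
    have := qb2_bounds h2; omega
  have hf2 : (Function.support fun j : ℤ =>
      T (2 * j ^ 2 - j) * qb2 m (k + j - 1) * qb2 m (k - j)).Finite := by
    apply supp_fin _ (1-k) ((m:ℤ) + 1 - k)
    intro j hj
    have h2 : qb2 m (k+j-1) ≠ 0 := fun h0 => hj (by rw [h0]; ring)
    have := qb2_bounds h2; omega
  rw [G, finsum_congr step, finsum_add_distrib hf1 hf2, ← mul_finsum _ _, sumA, sumB]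

lemma keyL2 (m : ℕ) (k : ℤ) : H (m+1) m k = T (2*k+1) * H m m k + G m m k := by
  have step : ∀ j : ℤ, T (2 * j ^ 2 + j) * qb2 (m+1) (k + 1 + j) * qb2 m (k - j)
      = T (2*k+1) * (T (2 * j ^ 2 + 3 * j + 1) * qb2 m (k + 1 + j) * qb2 m (k - j))
        + T (2 * j ^ 2 + j) * qb2 m (k + j) * qb2 m (k - j) := by
    intro j
    rw [qb2_succ']
    have e : T (R:=ℤ) (2 * j ^ 2 + j) * T (2*(k+1+j))
        = T (2*k+1) * T (2 * j ^ 2 + 3 * j + 1) := by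
      rw [← T_add, ← T_add]; congr 1; ring
    calc T (2 * j ^ 2 + j) * (T (2*(k+1+j)) * qb2 m (k+1+j) + qb2 m (k+1+j-1)) * qb2 m (k - j)
        = (T (2 * j ^ 2 + j) * T (2*(k+1+j))) * qb2 m (k+1+j) * qb2 m (k-j)
          + T (2 * j ^ 2 + j) * qb2 m (k+1+j-1) * qb2 m (k-j) := by ring
      _ = _ := by rw [e, show k+1+j-1 = k+j by ring]; ring
  have hf1 : (Function.support fun j : ℤ =>
      T (2*k+1) * (T (2 * j ^ 2 + 3 * j + 1) * qb2 m (k + 1 + j) * qb2 m (k - j))).Finite := by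
    apply supp_fin _ (-k-1) ((m:ℤ) - k - 1)
    intro j hj
    have h2 : qb2 m (k+1+j) ≠ 0 := fun h0 => hj (by rw [h0]; ring)
    have := qb2_bounds h2; omega
  have hf1' : (Function.support fun j : ℤ =>
      T (2 * j ^ 2 + 3 * j + 1) * qb2 m (k + 1 + j) * qb2 m (k - j)).Finite := by
    apply supp_fin _ (-k-1) ((m:ℤ) - k - 1)
    intro j hj
    have h2 : qb2 m (k+1+j) ≠ 0 := fun h0 => hj (by rw [h0]; ring)
    have := qb2_bounds h2; omega
  have hf2 : (Function.support fun j : ℤ =>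
      T (2 * j ^ 2 + j) * qb2 m (k + j) * qb2 m (k - j)).Finite := by
    apply supp_fin _ (-k) ((m:ℤ) - k)
    intro j hj
    have h2 : qb2 m (k+j) ≠ 0 := fun h0 => hj (by rw [h0]; ring)
    have := qb2_bounds h2; omega
  rw [H, finsum_congr step, finsum_add_distrib hf1 hf2, ← mul_finsum _ _, sumC, sumA]

lemma keyL3 (m : ℕ) (k : ℤ) :
    G (m+1) (m+1) k = G (m+1) m k + T (2*(m:ℤ)+2-2*k) * H (m+1) m (k-1) := by
  have step : ∀ j : ℤ, T (2 * j ^ 2 - j) * qb2 (m+1) (k + j) * qb2 (m+1) (k - j)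
      = T (2 * j ^ 2 - j) * qb2 (m+1) (k + j) * qb2 m (k - j)
        + T (2*(m:ℤ)+2-2*k) * (T (2 * j ^ 2 + j) * qb2 (m+1) (k + j) * qb2 m (k - 1 - j)) := by
    intro j
    rw [qb2_symm m (k - j)]
    have e : T (R:=ℤ) (2 * j ^ 2 - j) * T (2*((m:ℤ)+1-(k-j)))
        = T (2*(m:ℤ)+2-2*k) * T (2 * j ^ 2 + j) := by
      rw [← T_add, ← T_add]; congr 1; ring
    calc T (2 * j ^ 2 - j) * qb2 (m+1) (k + j)
          * (qb2 m (k-j) + T (2*((m:ℤ)+1-(k-j))) * qb2 m (k-j-1))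
        = T (2 * j ^ 2 - j) * qb2 (m+1) (k + j) * qb2 m (k - j)
          + (T (2 * j ^ 2 - j) * T (2*((m:ℤ)+1-(k-j)))) * qb2 (m+1) (k+j) * qb2 m (k-j-1) := by
          ring
      _ = _ := by rw [e, show k-j-1 = k-1-j by ring]; ring
  have hf1 : (Function.support fun j : ℤ =>
      T (2 * j ^ 2 - j) * qb2 (m+1) (k + j) * qb2 m (k - j)).Finite := by
    apply supp_fin _ (-k) ((m:ℤ) + 1 - k)
    intro j hj
    have h2 : qb2 (m+1) (k+j) ≠ 0 := fun h0 => hj (by rw [h0]; ring)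
    have := qb2_bounds h2; push_cast at this; omega
  have hf2 : (Function.support fun j : ℤ =>
      T (2*(m:ℤ)+2-2*k) * (T (2 * j ^ 2 + j) * qb2 (m+1) (k + j) * qb2 m (k - 1 - j))).Finite := by
    apply supp_fin _ (-k) ((m:ℤ) + 1 - k)
    intro j hj
    have h2 : qb2 (m+1) (k+j) ≠ 0 := fun h0 => hj (by rw [h0]; ring)
    have := qb2_bounds h2; push_cast at this; omega
  have hf2' : (Function.support fun j : ℤ =>
      T (2 * j ^ 2 + j) * qb2 (m+1) (k + j) * qb2 m (k - 1 - j)).Finite := by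
    apply supp_fin _ (-k) ((m:ℤ) + 1 - k)
    intro j hj
    have h2 : qb2 (m+1) (k+j) ≠ 0 := fun h0 => hj (by rw [h0]; ring)
    have := qb2_bounds h2; push_cast at this; omega
  have hG : (∑ᶠ j : ℤ, T (2 * j ^ 2 - j) * qb2 (m+1) (k + j) * qb2 m (k - j)) = G (m+1) m k := rfl
  rw [G, finsum_congr step, finsum_add_distrib hf1 hf2, ← mul_finsum _ _, hG, sumE]

lemma keyL4 (m : ℕ) (k : ℤ) :
    H (m+1) (m+1) k = H (m+1) m k + T (2*(m:ℤ)+1-2*k) * G (m+1) m k := by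
  have step : ∀ j : ℤ, T (2 * j ^ 2 + j) * qb2 (m+1) (k + 1 + j) * qb2 (m+1) (k - j)
      = T (2 * j ^ 2 + j) * qb2 (m+1) (k + 1 + j) * qb2 m (k - j)
        + T (2*(m:ℤ)+1-2*k)
          * (T (2 * j ^ 2 + 3 * j + 1) * qb2 (m+1) (k + 1 + j) * qb2 m (k - 1 - j)) := by
    intro j
    rw [qb2_symm m (k - j)]
    have e : T (R:=ℤ) (2 * j ^ 2 + j) * T (2*((m:ℤ)+1-(k-j)))
        = T (2*(m:ℤ)+1-2*k) * T (2 * j ^ 2 + 3 * j + 1) := by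
      rw [← T_add, ← T_add]; congr 1; ring
    calc T (2 * j ^ 2 + j) * qb2 (m+1) (k + 1 + j)
          * (qb2 m (k-j) + T (2*((m:ℤ)+1-(k-j))) * qb2 m (k-j-1))
        = T (2 * j ^ 2 + j) * qb2 (m+1) (k + 1 + j) * qb2 m (k - j)
          + (T (2 * j ^ 2 + j) * T (2*((m:ℤ)+1-(k-j)))) * qb2 (m+1) (k+1+j) * qb2 m (k-j-1) := by
          ring
      _ = _ := by rw [e, show k-j-1 = k-1-j by ring]; ring
  have hf1 : (Function.support fun j : ℤ =>
      T (2 * j ^ 2 + j) * qb2 (m+1) (k + 1 + j) * qb2 m (k - j)).Finite := by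
    apply supp_fin _ (-k-1) ((m:ℤ) - k)
    intro j hj
    have h2 : qb2 (m+1) (k+1+j) ≠ 0 := fun h0 => hj (by rw [h0]; ring)
    have := qb2_bounds h2; push_cast at this; omega
  have hf2 : (Function.support fun j : ℤ =>
      T (2*(m:ℤ)+1-2*k)
        * (T (2 * j ^ 2 + 3 * j + 1) * qb2 (m+1) (k + 1 + j) * qb2 m (k - 1 - j))).Finite := by
    apply supp_fin _ (-k-1) ((m:ℤ) - k)
    intro j hj
    have h2 : qb2 (m+1) (k+1+j) ≠ 0 := fun h0 => hj (by rw [h0]; ring)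
    have := qb2_bounds h2; push_cast at this; omega
  have hf2' : (Function.support fun j : ℤ =>
      T (2 * j ^ 2 + 3 * j + 1) * qb2 (m+1) (k + 1 + j) * qb2 m (k - 1 - j)).Finite := by
    apply supp_fin _ (-k-1) ((m:ℤ) - k)
    intro j hj
    have h2 : qb2 (m+1) (k+1+j) ≠ 0 := fun h0 => hj (by rw [h0]; ring)
    have := qb2_bounds h2; push_cast at this; omega
  have hH : (∑ᶠ j : ℤ, T (2 * j ^ 2 + j) * qb2 (m+1) (k + 1 + j) * qb2 m (k - j))
      = H (m+1) m k := rfl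
  rw [H, finsum_congr step, finsum_add_distrib hf1 hf2, ← mul_finsum _ _, hH, sumD]

/- ### The main mutual induction -/

lemma main (n : ℕ) : ∀ k : ℤ,
    G ((n+1)/2) (n/2) k = qb n (2*k) ∧ H ((n+1)/2) (n/2) k = qb n (2*k+1) := by
  induction n with
  | zero =>
    intro k
    show G 0 0 k = qb 0 (2*k) ∧ H 0 0 k = qb 0 (2*k+1)
    constructor
    · by_cases hk : k = 0
      · subst hk
        rw [show qb 0 (2*(0:ℤ)) = 1 by rw [qb_zero']; norm_num, G]
        rw [finsum_eq_single _ (0 : ℤ)]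
        · norm_num [qb2_zero', T_zero]
        · intro j hj
          rw [show (0:ℤ) + j = j by ring, qb2_zero', if_neg hj]; ring
      · rw [show qb 0 (2*k) = 0 by rw [qb_zero', if_neg (by omega)], G]
        apply finsum_eq_zero_of_forall_eq_zero
        intro j
        by_cases hj : k + j = 0
        · rw [qb2_zero' (k - j), if_neg (show k - j ≠ 0 by omega)]; ring
        · rw [qb2_zero' (k+j), if_neg hj]; ring
    · rw [show qb 0 (2*k+1) = 0 by rw [qb_zero', if_neg (by omega)], H]
      apply finsum_eq_zero_of_forall_eq_zero
      intro j
      by_cases hj : k + 1 + j = 0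
      · rw [qb2_zero' (k - j), if_neg (show k - j ≠ 0 by omega)]; ring
      · rw [qb2_zero' (k+1+j), if_neg hj]; ring
  | succ n IH =>
    rcases Nat.even_or_odd n with he | ho
    · obtain ⟨m, rfl⟩ := he
      intro k
      have d1 : (m + m + 1 + 1) / 2 = m + 1 := by omega
      have d2 : (m + m + 1) / 2 = m := by omega
      have d3 : (m + m) / 2 = m := by omega
      have IH1 := fun k => (IH k).1
      have IH2 := fun k => (IH k).2
      simp only [d2, d3] at IH1 IH2
      rw [d1, d2]
      constructor
      · rw [qb_succ', ← IH1 k, show 2*k-1 = 2*(k-1)+1 by ring, ← IH2 (k-1), keyL1]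
      · rw [qb_succ', show 2*k+1-1 = 2*k by ring, ← IH1 k, ← IH2 k, keyL2]
    · obtain ⟨m, rfl⟩ := ho
      intro k
      have d1 : (2*m + 1 + 1 + 1) / 2 = m + 1 := by omega
      have d2 : (2*m + 1 + 1) / 2 = m + 1 := by omega
      have d3 : (2*m + 1) / 2 = m := by omega
      have IH1 := fun k => (IH k).1
      have IH2 := fun k => (IH k).2
      simp only [d2, d3] at IH1 IH2
      rw [d1, d2]
      constructor
      · rw [qb_symm, ← IH1 k, show 2*k-1 = 2*(k-1)+1 by ring, ← IH2 (k-1), keyL3,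
          show ((2*m+1:ℕ):ℤ) + 1 - 2*k = 2*(m:ℤ)+2-2*k by push_cast; ring]
      · rw [qb_symm, show 2*k+1-1 = 2*k by ring, ← IH1 k, ← IH2 k, keyL4,
          show ((2*m+1:ℕ):ℤ) + 1 - (2*k+1) = 2*(m:ℤ)+1-2*k by push_cast; ring]

theorem stmt17 (n : ℕ) (k : ℤ) : g n k = qb n (2 * k) := by
  rw [g_eq]
  exact (main n k).1
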